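/- Let D : [0,∞) → [0,∞) be non-decreasing and right-continuous, I > 0, b* = inf{b : D(b) ≥ I}, and suppose D(b*) ≥ I. Then the cost of the pure strategy of bidding b* for all requests exceeds the lower bound I·b* − ∫₀^{b*} D(u) du by at most ((D(b*) − D⁻(b*))/D(b*)) · ∫₀^{b*} D(u) du, where the pure strategy bids b* on a fraction I/D(b*) of requests. -/
import Mathlib


open MeasureTheory Topology

/-- The pure strategy bidding `b* = inf{b ≥ 0 : D b ≥ I}` with weight
`I / D b*` exceeds the lower bound `I·b* − ∫₀^{b*} D` by at most
`((D b* − D⁻(b*)) / D b*) · ∫₀^{b*} D`. -/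
theorem stmt7 (D : ℝ → ℝ) (hmono : Monotone D)
    (hrc : ∀ a : ℝ, ContinuousWithinAt D (Set.Ici a) a)
    (hnn : ∀ b, 0 ≤ D b) (I : ℝ) (hI : 0 < I)
    (bstar : ℝ) (hbstar : IsLeast {b : ℝ | 0 ≤ b ∧ I ≤ D b} bstar)
    (Dminus : ℝ) (hDminus : Filter.Tendsto D (𝓝[<] bstar) (𝓝 Dminus)) :
    (I / D bstar) * (D bstar * bstar - ∫ u in (0:ℝ)..bstar, D u) -
        (I * bstar - ∫ u in (0:ℝ)..bstar, D u) ≤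
      ((D bstar - Dminus) / D bstar) * ∫ u in (0:ℝ)..bstar, D u := by
  have hb0 : 0 ≤ bstar := hbstar.1.1
  have hDb : 0 < D bstar := lt_of_lt_of_le hI hbstar.1.2
  rcases eq_or_lt_of_le hb0 with h0 | hbpos
  · simp [← h0]
  · -- bstar > 0
    have hC : 0 ≤ ∫ u in (0:ℝ)..bstar, D u :=
      intervalIntegral.integral_nonneg hb0 (fun u _ => hnn u)
    have hlt : ∀ u, u < bstar → D u ≤ I := by
      intro u hu
      by_contra h
      push_neg at h
      rcases le_or_gt 0 u with h0u | h0u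
      · exact absurd (hbstar.2 ⟨h0u, h.le⟩) (not_le.mpr hu)
      · exact absurd (hbstar.2 ⟨le_refl 0, (hmono h0u.le).trans' h.le⟩)
          (not_le.mpr hbpos)
    have hDm : Dminus ≤ I := by
      refine le_of_tendsto hDminus ?_
      filter_upwards [self_mem_nhdsWithin] with u hu
      exact hlt u hu
    set C := ∫ u in (0:ℝ)..bstar, D u with hCdef
    have key : ((D bstar - I) / D bstar) * C ≤ ((D bstar - Dminus) / D bstar) * C := by
      gcongr
    calc (I / D bstar) * (D bstar * bstar - C) - (I * bstar - C)
        = ((D bstar - I) / D bstar) * C := by field_simp; ring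
      _ ≤ ((D bstar - Dminus) / D bstar) * C := key
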